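/- Let F be a finite field, X a finite-dimensional F-vector space, and f, g : X → F^Ω two F-linear maps. If f and g are locally ω-equivalent (i.e., wt(f(θ)) = wt(g(θ)) for all θ ∈ X), then Wt(f[B]) = Wt(g[B]) for every F-subspace B ≤ X. -/

import Mathlib

open scoped Classical
open Finset

/-- ω-weight of a vector β ∈ F^Ω. -/
noncomputable def wwt {F Ω : Type*} [Field F] [Fintype Ω] (ω : Ω → ℝ) (β : Ω → F) : ℝ :=
  ∑ i ∈ univ.filter (fun i => β i ≠ 0), ω i

/-- ω-weight of a set A ⊆ F^Ω. -/
noncomputable def WWt {F Ω : Type*} [Field F] [Fintype Ω] (ω : Ω → ℝ) (A : Set (Ω → F)) : ℝ :=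
  ∑ i ∈ univ.filter (fun i => ∃ β ∈ A, β i ≠ 0), ω i
lemma countlemma {F : Type*} [Field F] [Fintype F] {V : Type*} [AddCommGroup V] [Module F V]
    [Fintype V] (φ : V →ₗ[F] F) (hφ : φ ≠ 0) :
    (univ.filter (fun v : V => φ v ≠ 0)).card * Fintype.card F
      = Fintype.card V * (Fintype.card F - 1) := by
  obtain ⟨v0, hv0⟩ : ∃ v, φ v ≠ 0 := by
    by_contra h
    push_neg at h
    exact hφ (LinearMap.ext fun v => by simp [h v])
  have hsurj : Function.Surjective φ := by
    intro a
    exact ⟨(a / φ v0) • v0, by simp only [map_smul, smul_eq_mul]; exact div_mul_cancel₀ a hv0⟩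
  have hcard : Fintype.card V = Fintype.card F * Nat.card φ.toAddMonoidHom.ker := by
    have h1 := AddSubgroup.card_eq_card_quotient_mul_card_addSubgroup φ.toAddMonoidHom.ker
    have h2 : Nat.card (V ⧸ φ.toAddMonoidHom.ker) = Fintype.card F := by
      have e := QuotientAddGroup.quotientKerEquivRange φ.toAddMonoidHom
      rw [Nat.card_congr e.toEquiv]
      have : φ.toAddMonoidHom.range = ⊤ := AddMonoidHom.range_eq_top.2 hsurj
      rw [this]
      simp [Nat.card_eq_fintype_card]
    rw [Nat.card_eq_fintype_card] at h1
    rw [h1, h2]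
  have hker : Nat.card φ.toAddMonoidHom.ker = (univ.filter (fun v : V => φ v = 0)).card := by
    rw [Nat.card_eq_fintype_card, ← Fintype.card_subtype]
    exact Fintype.card_congr (Equiv.subtypeEquivRight (by simp [AddMonoidHom.mem_ker]))
  have hsplit : (univ.filter (fun v : V => φ v = 0)).card
      + (univ.filter (fun v : V => φ v ≠ 0)).card = Fintype.card V := by
    rw [Finset.card_filter_add_card_filter_not, Finset.card_univ]
  set N := (univ.filter (fun v : V => φ v ≠ 0)).card
  set K := (univ.filter (fun v : V => φ v = 0)).card
  rw [hker] at hcard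
  obtain ⟨m, hm⟩ : ∃ m, Fintype.card F = m + 1 :=
    ⟨Fintype.card F - 1, (Nat.succ_pred_eq_of_pos Fintype.card_pos).symm⟩
  rw [hm] at hcard ⊢
  simp only [Nat.add_sub_cancel]
  have hcard2 : Fintype.card V = K + m * K := by rw [hcard]; ring
  have hN : N = m * K := by omega
  rw [hcard, hN]
  ring

theorem stmt2 {F Ω : Type*} [Field F] [Fintype F] [Fintype Ω] [Nonempty Ω]
    {X : Type*} [AddCommGroup X] [Module F X] [FiniteDimensional F X]
    (ω : Ω → ℝ) (hω : ∀ i, 0 < ω i)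
    (f g : X →ₗ[F] (Ω → F))
    (hloc : ∀ θ : X, wwt ω (f θ) = wwt ω (g θ))
    (B : Submodule F X) :
    WWt ω (f '' (B : Set X)) = WWt ω (g '' (B : Set X)) := by
  haveI : Finite X := Module.finite_of_finite F
  haveI : Fintype X := Fintype.ofFinite X
  haveI : Fintype B := Fintype.ofFinite B
  have key : ∀ h : X →ₗ[F] (Ω → F),
      (Fintype.card B : ℝ) * ((Fintype.card F : ℝ) - 1) * WWt ω (h '' (B : Set X))
        = (Fintype.card F : ℝ) * ∑ θ : B, wwt ω (h θ) := by
    intro h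
    have step1 : (Fintype.card F : ℝ) * ∑ θ : B, wwt ω (h θ)
        = ∑ i : Ω, (((univ.filter (fun θ : B => h θ i ≠ 0)).card : ℝ)
            * (Fintype.card F : ℝ)) * ω i := by
      unfold wwt
      simp_rw [Finset.sum_filter]
      rw [Finset.sum_comm, Finset.mul_sum]
      refine Finset.sum_congr rfl fun i _ => ?_
      rw [← Finset.sum_filter, Finset.sum_const, nsmul_eq_mul]
      ring
    have step2 : ∀ i : Ω,
        (((univ.filter (fun θ : B => h θ i ≠ 0)).card : ℝ) * (Fintype.card F : ℝ))
          = (if ∃ β ∈ h '' (B : Set X), β i ≠ 0 then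
              (Fintype.card B : ℝ) * ((Fintype.card F : ℝ) - 1) else 0) := by
      intro i
      set ψ : B →ₗ[F] F := (LinearMap.proj i).comp (h.comp B.subtype) with hψ
      have hψapp : ∀ θ : B, ψ θ = h θ i := fun θ => rfl
      by_cases hz : ψ = 0
      · have h1 : (univ.filter (fun θ : B => h θ i ≠ 0)) = ∅ := by
          apply Finset.filter_false_of_mem
          intro θ _
          simp [← hψapp θ, hz]
        have h2 : ¬ ∃ β ∈ h '' (B : Set X), β i ≠ 0 := by
          rintro ⟨β, ⟨θ, hθ, rfl⟩, hne⟩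
          exact hne (by rw [← hψapp ⟨θ, hθ⟩, hz]; rfl)
        rw [h1, if_neg h2]
        simp
      · have h2 : ∃ β ∈ h '' (B : Set X), β i ≠ 0 := by
          obtain ⟨θ, hθ⟩ : ∃ θ : B, ψ θ ≠ 0 := by
            by_contra hc
            push_neg at hc
            exact hz (LinearMap.ext fun θ => by simp [hc θ])
          exact ⟨h θ, ⟨θ, θ.2, rfl⟩, by rw [← hψapp θ]; exact hθ⟩
        rw [if_pos h2]
        have hq : (1 : ℕ) ≤ Fintype.card F := Fintype.card_pos
        have hnat := countlemma ψ hz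
        simp_rw [hψapp] at hnat
        have hcast := congrArg (fun n : ℕ => (n : ℝ)) hnat
        push_cast [Nat.cast_sub hq] at hcast
        exact hcast
    rw [step1]
    unfold WWt
    rw [Finset.mul_sum, Finset.sum_filter]
    refine (Finset.sum_congr rfl fun i _ => ?_).symm
    rw [step2 i]
    by_cases hc : ∃ β ∈ h '' (B : Set X), β i ≠ 0 <;> simp [hc]
  have hne : (Fintype.card B : ℝ) * ((Fintype.card F : ℝ) - 1) ≠ 0 := by
    have h1 : (0 : ℝ) < Fintype.card B := by exact_mod_cast Fintype.card_pos
    have h2 : (1 : ℝ) < Fintype.card F := by exact_mod_cast Fintype.one_lt_card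
    exact mul_ne_zero (ne_of_gt h1) (ne_of_gt (by linarith))
  apply mul_left_cancel₀ hne
  rw [key f, key g]
  congr 1
  exact Finset.sum_congr rfl fun θ _ => hloc θ
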